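/- With subintervals [α₁,α₂]⊆[a,b] and [β₁,β₂]⊆[c,d], weight w nonnegative, and f C² with |∂²f/∂t∂s| ≤ M, for (x,y)∈[α₁,α₂]×[β₁,β₂]: |f(x,y) - (1/m(α₁,α₂))∫_{α₁}^{α₂}w(t)f(t,y)dt - (1/m(β₁,β₂))∫_{β₁}^{β₂}w(s)f(x,s)ds + (1/(m(α₁,α₂)m(β₁,β₂)))∫_{α₁}^{α₂}∫_{β₁}^{β₂}w(t)w(s)f(t,s)ds dt| ≤ A₁(x)B₁(y)M/(m(α₁,α₂)m(β₁,β₂)), where A₁(x)=∫_{α₁}^x(x-u)w(u)du+∫_x^{α₂}(u-x)w(u)du and B₁(y)=∫_{β₁}^y(y-u)w(u)du+∫_y^{β₂}(u-y)w(u)du. -/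

import Mathlib

open Set MeasureTheory intervalIntegral

theorem weighted_ostrowski_subinterval (a b c d α₁ α₂ β₁ β₂ M : ℝ)
    (ha₁ : a ≤ α₁) (hα : α₁ < α₂) (hα₂ : α₂ ≤ b)
    (hb₁ : c ≤ β₁) (hβ : β₁ < β₂) (hβ₂ : β₂ ≤ d)
    (w : ℝ → ℝ) (hw0 : ∀ u ∈ Icc a b ∪ Icc c d, 0 ≤ w u)
    (hwab : IntervalIntegrable w volume a b)
    (hwcd : IntervalIntegrable w volume c d)
    (hmα : 0 < ∫ u in α₁..α₂, w u) (hmβ : 0 < ∫ u in β₁..β₂, w u)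
    (f fx fxy : ℝ → ℝ → ℝ)
    (hfc : ContinuousOn (fun p : ℝ × ℝ => f p.1 p.2) (Icc a b ×ˢ Icc c d))
    (hfx : ∀ x ∈ Icc a b, ∀ y ∈ Icc c d, HasDerivAt (fun t => f t y) (fx x y) x)
    (hfxy : ∀ x ∈ Icc a b, ∀ y ∈ Icc c d, HasDerivAt (fun s => fx x s) (fxy x y) y)
    (hfxyc : ContinuousOn (fun p : ℝ × ℝ => fxy p.1 p.2) (Icc a b ×ˢ Icc c d))
    (hM : ∀ x ∈ Icc a b, ∀ y ∈ Icc c d, |fxy x y| ≤ M) :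
    ∀ x ∈ Icc α₁ α₂, ∀ y ∈ Icc β₁ β₂,
      |f x y - (1 / ∫ u in α₁..α₂, w u) * (∫ t in α₁..α₂, w t * f t y) -
          (1 / ∫ u in β₁..β₂, w u) * (∫ s in β₁..β₂, w s * f x s) +
          (1 / ((∫ u in α₁..α₂, w u) * ∫ u in β₁..β₂, w u)) *
            ∫ t in α₁..α₂, ∫ s in β₁..β₂, w t * w s * f t s| ≤
        ((∫ u in α₁..x, (x - u) * w u) + ∫ u in x..α₂, (u - x) * w u) *
          ((∫ u in β₁..y, (y - u) * w u) + ∫ u in y..β₂, (u - y) * w u) * M /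
          ((∫ u in α₁..α₂, w u) * ∫ u in β₁..β₂, w u) := by
  intro x hx y hy
  have hab : a ≤ b := ha₁.trans (hα.le.trans hα₂)
  have hcd : c ≤ d := hb₁.trans (hβ.le.trans hβ₂)
  have hIab : Icc α₁ α₂ ⊆ Icc a b := Icc_subset_Icc ha₁ hα₂
  have hJcd : Icc β₁ β₂ ⊆ Icc c d := Icc_subset_Icc hb₁ hβ₂
  have hx' : x ∈ Icc a b := hIab hx
  have hy' : y ∈ Icc c d := hJcd hy
  have M0 : 0 ≤ M := le_trans (abs_nonneg _) (hM a ⟨le_refl a, hab⟩ c ⟨le_refl c, hcd⟩)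
  -- the mean value theorem estimate
  have key : ∀ t ∈ Icc a b, ∀ s ∈ Icc c d,
      |f x y - f t y - f x s + f t s| ≤ M * (|x - t| * |y - s|) := by
    intro t ht s hs
    have convab : Convex ℝ (Icc a b) := convex_Icc a b
    have convcd : Convex ℝ (Icc c d) := convex_Icc c d
    have inner : ∀ u ∈ Icc a b, ‖fx u y - fx u s‖ ≤ M * |y - s| := by
      intro u hu
      have h1 : ∀ v ∈ Icc c d, HasDerivWithinAt (fun v => fx u v) (fxy u v) (Icc c d) v :=
        fun v hv => (hfxy u hu v hv).hasDerivWithinAt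
      have h2 := convcd.norm_image_sub_le_of_norm_hasDerivWithin_le h1
        (fun v hv => by rw [Real.norm_eq_abs]; exact hM u hu v hv) hs hy'
      simpa [Real.norm_eq_abs] using h2
    have houter : ∀ u ∈ Icc a b, HasDerivWithinAt (fun u => f u y - f u s)
        (fx u y - fx u s) (Icc a b) u :=
      fun u hu => ((hfx u hu y hy').sub (hfx u hu s hs)).hasDerivWithinAt
    have h2 := convab.norm_image_sub_le_of_norm_hasDerivWithin_le houter inner ht hx'
    rw [Real.norm_eq_abs, Real.norm_eq_abs] at h2
    calc |f x y - f t y - f x s + f t s|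
        = |(f x y - f x s) - (f t y - f t s)| := by
          rw [show f x y - f t y - f x s + f t s = (f x y - f x s) - (f t y - f t s) from by ring]
      _ ≤ M * |y - s| * |x - t| := h2
      _ = M * (|x - t| * |y - s|) := by ring
  -- convert interval integrals to set integrals
  simp only [intervalIntegral.integral_of_le hα.le, intervalIntegral.integral_of_le hβ.le] at hmα hmβ ⊢
  set I := Ioc α₁ α₂ with hIdef
  set J := Ioc β₁ β₂ with hJdef
  have hIsub : I ⊆ Icc a b := Ioc_subset_Icc_self.trans hIab
  have hJsub : J ⊆ Icc c d := Ioc_subset_Icc_self.trans hJcd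
  set μ := volume.restrict I with hμdef
  set ν := volume.restrict J with hνdef
  have hμν : μ.prod ν = (volume.prod volume).restrict (I ×ˢ J) :=
    Measure.prod_restrict I J
  have hwα : IntervalIntegrable w volume α₁ α₂ :=
    hwab.mono_set (by rw [uIcc_of_le hα.le, uIcc_of_le hab]; exact hIab)
  have hwβ : IntervalIntegrable w volume β₁ β₂ :=
    hwcd.mono_set (by rw [uIcc_of_le hβ.le, uIcc_of_le hcd]; exact hJcd)
  have hwI : Integrable w μ := hwα.1
  have hwJ : Integrable w ν := hwβ.1
  have hwI0 : ∀ t ∈ I, 0 ≤ w t := fun t ht => hw0 t (Or.inl (hIsub ht))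
  have hwJ0 : ∀ s ∈ J, 0 ≤ w s := fun s hs => hw0 s (Or.inr (hJsub hs))
  have hcompact : IsCompact (Icc a b ×ˢ Icc c d) := isCompact_Icc.prod isCompact_Icc
  have hmsIJ : MeasurableSet (I ×ˢ J) := measurableSet_Ioc.prod measurableSet_Ioc
  have aesm_prod : ∀ g : ℝ × ℝ → ℝ, ContinuousOn g (Icc a b ×ˢ Icc c d) →
      AEStronglyMeasurable g (μ.prod ν) := by
    intro g hg
    rw [hμν]
    exact ((hg.mono (prod_mono hIsub hJsub)).aestronglyMeasurable hmsIJ)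
  have ae_mem_prod : ∀ᵐ z ∂(μ.prod ν), z ∈ I ×ˢ J := by
    rw [hμν]; exact ae_restrict_mem hmsIJ
  have hww : Integrable (fun z : ℝ × ℝ => w z.1 * w z.2) (μ.prod ν) := Integrable.mul_prod hwI hwJ
  have int_bdd : ∀ g : ℝ × ℝ → ℝ, ContinuousOn g (Icc a b ×ˢ Icc c d) →
      Integrable (fun z => w z.1 * w z.2 * g z) (μ.prod ν) := by
    intro g hg
    obtain ⟨C, hC⟩ := hcompact.exists_bound_of_continuousOn hg
    have h := Integrable.bdd_mul hww (aesm_prod g hg) (c := C) (by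
      filter_upwards [ae_mem_prod] with z hz
      exact hC z ⟨hIsub hz.1, hJsub hz.2⟩)
    exact h.congr (Filter.Eventually.of_forall fun z => by ring)
  -- continuity of slices
  have hslice1 : ContinuousOn (fun z : ℝ × ℝ => f z.1 y) (Icc a b ×ˢ Icc c d) :=
    hfc.comp ((continuous_fst.prodMk continuous_const).continuousOn)
      (fun z hz => ⟨hz.1, hy'⟩)
  have hslice2 : ContinuousOn (fun z : ℝ × ℝ => f x z.2) (Icc a b ×ˢ Icc c d) :=
    hfc.comp ((continuous_const.prodMk continuous_snd).continuousOn)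
      (fun z hz => ⟨hx', hz.2⟩)
  have hT1 : Integrable (fun z : ℝ × ℝ => w z.1 * w z.2 * f x y) (μ.prod ν) :=
    int_bdd _ continuousOn_const
  have hT2 : Integrable (fun z : ℝ × ℝ => w z.1 * w z.2 * f z.1 y) (μ.prod ν) :=
    int_bdd _ hslice1
  have hT3 : Integrable (fun z : ℝ × ℝ => w z.1 * w z.2 * f x z.2) (μ.prod ν) :=
    int_bdd _ hslice2
  have hT4 : Integrable (fun z : ℝ × ℝ => w z.1 * w z.2 * f z.1 z.2) (μ.prod ν) :=
    int_bdd _ hfc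
  have hPfull : Integrable
      (fun z : ℝ × ℝ => w z.1 * w z.2 * (f x y - f z.1 y - f x z.2 + f z.1 z.2)) (μ.prod ν) :=
    (((hT1.sub hT2).sub hT3).add hT4).congr (Filter.Eventually.of_forall fun z => by
      simp only [Pi.add_apply, Pi.sub_apply, Pi.neg_apply]; ring)
  -- values of the product integrals
  have i1 : (∫ z : ℝ × ℝ, w z.1 * w z.2 * f x y ∂(μ.prod ν))
      = (∫ t, w t ∂μ) * ((∫ s, w s ∂ν) * f x y) := by
    rw [show (fun z : ℝ × ℝ => w z.1 * w z.2 * f x y) = fun z : ℝ × ℝ => w z.1 * (w z.2 * f x y)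
      from funext fun z => by ring]
    exact (MeasureTheory.integral_prod_mul (μ := μ) (ν := ν) w (fun s => w s * f x y)).trans
      (by rw [MeasureTheory.integral_mul_const])
  have i2 : (∫ z : ℝ × ℝ, w z.1 * w z.2 * f z.1 y ∂(μ.prod ν))
      = (∫ t, w t * f t y ∂μ) * ∫ s, w s ∂ν := by
    rw [show (fun z : ℝ × ℝ => w z.1 * w z.2 * f z.1 y)
      = fun z : ℝ × ℝ => (w z.1 * f z.1 y) * w z.2 from funext fun z => by ring]
    exact MeasureTheory.integral_prod_mul (μ := μ) (ν := ν) (fun t => w t * f t y) w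
  have i3 : (∫ z : ℝ × ℝ, w z.1 * w z.2 * f x z.2 ∂(μ.prod ν))
      = (∫ t, w t ∂μ) * ∫ s, w s * f x s ∂ν := by
    rw [show (fun z : ℝ × ℝ => w z.1 * w z.2 * f x z.2)
      = fun z : ℝ × ℝ => w z.1 * (w z.2 * f x z.2) from funext fun z => by ring]
    exact MeasureTheory.integral_prod_mul (μ := μ) (ν := ν) w (fun s => w s * f x s)
  have i4 : (∫ t, ∫ s, w t * w s * f t s ∂ν ∂μ)
      = ∫ z : ℝ × ℝ, w z.1 * w z.2 * f z.1 z.2 ∂(μ.prod ν) := integral_integral hT4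
  have hsplit : (∫ z : ℝ × ℝ, w z.1 * w z.2 * (f x y - f z.1 y - f x z.2 + f z.1 z.2) ∂(μ.prod ν))
      = (∫ t, w t ∂μ) * ((∫ s, w s ∂ν) * f x y)
        - (∫ t, w t * f t y ∂μ) * ∫ s, w s ∂ν
        - (∫ t, w t ∂μ) * ∫ s, w s * f x s ∂ν
        + ∫ t, ∫ s, w t * w s * f t s ∂ν ∂μ := by
    rw [show (fun z : ℝ × ℝ => w z.1 * w z.2 * (f x y - f z.1 y - f x z.2 + f z.1 z.2))
        = fun z : ℝ × ℝ => (w z.1 * w z.2 * f x y - w z.1 * w z.2 * f z.1 y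
            - w z.1 * w z.2 * f x z.2) + w z.1 * w z.2 * f z.1 z.2
        from funext fun z => by ring]
    have hS1 : Integrable (fun z : ℝ × ℝ =>
        w z.1 * w z.2 * f x y - w z.1 * w z.2 * f z.1 y) (μ.prod ν) := hT1.sub hT2
    have hS2 : Integrable (fun z : ℝ × ℝ =>
        w z.1 * w z.2 * f x y - w z.1 * w z.2 * f z.1 y - w z.1 * w z.2 * f x z.2)
        (μ.prod ν) := hS1.sub hT3
    rw [integral_add hS2 hT4, integral_sub hS1 hT3, integral_sub hT1 hT2, i1, i2, i3, i4]
  have hp : 0 < (∫ t, w t ∂μ) * ∫ s, w s ∂ν := mul_pos hmα hmβ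
  have hEq : f x y - (1 / ∫ t, w t ∂μ) * (∫ t, w t * f t y ∂μ)
      - (1 / ∫ s, w s ∂ν) * (∫ s, w s * f x s ∂ν)
      + (1 / ((∫ t, w t ∂μ) * ∫ s, w s ∂ν)) * ∫ t, ∫ s, w t * w s * f t s ∂ν ∂μ
      = (1 / ((∫ t, w t ∂μ) * ∫ s, w s ∂ν)) *
        ∫ z : ℝ × ℝ, w z.1 * w z.2 * (f x y - f z.1 y - f x z.2 + f z.1 z.2) ∂(μ.prod ν) := by
    rw [hsplit]
    field_simp
  -- integrability of the dominating product
  have gt_int : Integrable (fun t => |x - t| * w t) μ := by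
    apply Integrable.bdd_mul hwI ((continuous_const.sub continuous_id).abs.aestronglyMeasurable)
      (c := α₂ - α₁)
    filter_upwards [ae_restrict_mem (measurableSet_Ioc)] with t ht
    obtain ⟨ht1, ht2⟩ := ht
    simp only [id_eq, Real.norm_eq_abs, abs_abs, Pi.sub_apply]
    have h1 := hx.1
    have h2 := hx.2
    exact abs_le.2 ⟨by linarith, by linarith⟩
  have gs_int0 : Integrable (fun s => |y - s| * w s) ν := by
    apply Integrable.bdd_mul hwJ ((continuous_const.sub continuous_id).abs.aestronglyMeasurable)
      (c := β₂ - β₁)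
    filter_upwards [ae_restrict_mem (measurableSet_Ioc)] with s hs
    obtain ⟨hs1, hs2⟩ := hs
    simp only [id_eq, Real.norm_eq_abs, abs_abs, Pi.sub_apply]
    have h1 := hy.1
    have h2 := hy.2
    exact abs_le.2 ⟨by linarith, by linarith⟩
  have gs_int : Integrable (fun s => M * (|y - s| * w s)) ν := gs_int0.const_mul M
  have hG : Integrable
      (fun z : ℝ × ℝ => (|x - z.1| * w z.1) * (M * (|y - z.2| * w z.2))) (μ.prod ν) :=
    Integrable.mul_prod gt_int gs_int
  have hbound : ∀ᵐ z ∂(μ.prod ν), ‖w z.1 * w z.2 * (f x y - f z.1 y - f x z.2 + f z.1 z.2)‖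
      ≤ (|x - z.1| * w z.1) * (M * (|y - z.2| * w z.2)) := by
    filter_upwards [ae_mem_prod] with z hz
    have hwt := hwI0 _ hz.1
    have hws := hwJ0 _ hz.2
    have hk := key z.1 (hIsub hz.1) z.2 (hJsub hz.2)
    rw [Real.norm_eq_abs, abs_mul, abs_mul, abs_of_nonneg hwt, abs_of_nonneg hws]
    calc w z.1 * w z.2 * |f x y - f z.1 y - f x z.2 + f z.1 z.2|
        ≤ w z.1 * w z.2 * (M * (|x - z.1| * |y - z.2|)) :=
          mul_le_mul_of_nonneg_left hk (mul_nonneg hwt hws)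
      _ = (|x - z.1| * w z.1) * (M * (|y - z.2| * w z.2)) := by ring
  have hGval : (∫ z : ℝ × ℝ, (|x - z.1| * w z.1) * (M * (|y - z.2| * w z.2)) ∂(μ.prod ν))
      = (∫ t, |x - t| * w t ∂μ) * (M * ∫ s, |y - s| * w s ∂ν) := by
    exact (MeasureTheory.integral_prod_mul (μ := μ) (ν := ν) (fun t => |x - t| * w t)
      (fun s => M * (|y - s| * w s))).trans (by rw [MeasureTheory.integral_const_mul])
  have hnorm : |∫ z : ℝ × ℝ, w z.1 * w z.2 * (f x y - f z.1 y - f x z.2 + f z.1 z.2) ∂(μ.prod ν)|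
      ≤ (∫ t, |x - t| * w t ∂μ) * (M * ∫ s, |y - s| * w s ∂ν) := by
    rw [← Real.norm_eq_abs, ← hGval]
    exact norm_integral_le_of_norm_le hG hbound
  -- identify the A₁ and B₁ factors
  have habs : Continuous (fun u : ℝ => |x - u|) := (continuous_const.sub continuous_id).abs
  have habs' : Continuous (fun u : ℝ => |y - u|) := (continuous_const.sub continuous_id).abs
  have hwx1 : IntervalIntegrable (fun u => |x - u| * w u) volume α₁ x := by
    refine (hwα.mono_set ?_).continuousOn_mul habs.continuousOn
    rw [uIcc_of_le hx.1, uIcc_of_le hα.le]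
    exact Icc_subset_Icc le_rfl hx.2
  have hwx2 : IntervalIntegrable (fun u => |x - u| * w u) volume x α₂ := by
    refine (hwα.mono_set ?_).continuousOn_mul habs.continuousOn
    rw [uIcc_of_le hx.2, uIcc_of_le hα.le]
    exact Icc_subset_Icc hx.1 le_rfl
  have hwy1 : IntervalIntegrable (fun u => |y - u| * w u) volume β₁ y := by
    refine (hwβ.mono_set ?_).continuousOn_mul habs'.continuousOn
    rw [uIcc_of_le hy.1, uIcc_of_le hβ.le]
    exact Icc_subset_Icc le_rfl hy.2
  have hwy2 : IntervalIntegrable (fun u => |y - u| * w u) volume y β₂ := by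
    refine (hwβ.mono_set ?_).continuousOn_mul habs'.continuousOn
    rw [uIcc_of_le hy.2, uIcc_of_le hβ.le]
    exact Icc_subset_Icc hy.1 le_rfl
  have hAx : (∫ u in α₁..x, (x - u) * w u) + (∫ u in x..α₂, (u - x) * w u)
      = ∫ t, |x - t| * w t ∂μ := by
    have e1 : (∫ u in α₁..x, (x - u) * w u) = ∫ u in α₁..x, |x - u| * w u := by
      apply integral_congr
      intro u hu
      rw [uIcc_of_le hx.1] at hu
      show (x - u) * w u = |x - u| * w u
      rw [abs_of_nonneg (by linarith [hu.2] : (0:ℝ) ≤ x - u)]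
    have e2 : (∫ u in x..α₂, (u - x) * w u) = ∫ u in x..α₂, |x - u| * w u := by
      apply integral_congr
      intro u hu
      rw [uIcc_of_le hx.2] at hu
      show (u - x) * w u = |x - u| * w u
      rw [abs_sub_comm, abs_of_nonneg (by linarith [hu.1] : (0:ℝ) ≤ u - x)]
    rw [e1, e2, integral_add_adjacent_intervals hwx1 hwx2,
      intervalIntegral.integral_of_le hα.le]
  have hBy : (∫ u in β₁..y, (y - u) * w u) + (∫ u in y..β₂, (u - y) * w u)
      = ∫ s, |y - s| * w s ∂ν := by
    have e1 : (∫ u in β₁..y, (y - u) * w u) = ∫ u in β₁..y, |y - u| * w u := by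
      apply integral_congr
      intro u hu
      rw [uIcc_of_le hy.1] at hu
      show (y - u) * w u = |y - u| * w u
      rw [abs_of_nonneg (by linarith [hu.2] : (0:ℝ) ≤ y - u)]
    have e2 : (∫ u in y..β₂, (u - y) * w u) = ∫ u in y..β₂, |y - u| * w u := by
      apply integral_congr
      intro u hu
      rw [uIcc_of_le hy.2] at hu
      show (u - y) * w u = |y - u| * w u
      rw [abs_sub_comm, abs_of_nonneg (by linarith [hu.1] : (0:ℝ) ≤ u - y)]
    rw [e1, e2, integral_add_adjacent_intervals hwy1 hwy2,
      intervalIntegral.integral_of_le hβ.le]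
  rw [hAx, hBy, hEq, abs_mul, abs_of_pos (by positivity : (0:ℝ) < 1 / ((∫ t, w t ∂μ) * ∫ s, w s ∂ν))]
  calc (1 / ((∫ t, w t ∂μ) * ∫ s, w s ∂ν)) *
        |∫ z : ℝ × ℝ, w z.1 * w z.2 * (f x y - f z.1 y - f x z.2 + f z.1 z.2) ∂(μ.prod ν)|
      ≤ (1 / ((∫ t, w t ∂μ) * ∫ s, w s ∂ν)) *
        ((∫ t, |x - t| * w t ∂μ) * (M * ∫ s, |y - s| * w s ∂ν)) :=
        mul_le_mul_of_nonneg_left hnorm (by positivity)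
    _ = (∫ t, |x - t| * w t ∂μ) * (∫ s, |y - s| * w s ∂ν) * M /
        ((∫ t, w t ∂μ) * ∫ s, w s ∂ν) := by ring
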